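/- arXiv:2105.00449 — 2 statements merged into one kernel-verified Lean document; each statement's English description precedes it below -/
import Mathlib

section
/- Let H and H_δ be Ising Hamiltonians on G=(V,E) with parameter-wise differences bounded by δ, and suppose ε > 0 satisfies 2δ(|E| + |V|) ≤ ε√(∑_b J_b² + ∑_x h_x²). Then for any configurations σ, τ with H_δ(σ) ≥ H_δ(τ), one has H(σ) ≥ H(τ) - ε·R_H, where R_H = max_{ξ,η}|H(ξ)-H(η)|. -/
open Finset

noncomputable section

def spin (b : Bool) : ℝ := if b then 1 else -1

def pairProd {V : Type*} (σ : V → Bool) : Sym2 V → ℝ :=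
  Sym2.lift ⟨fun x y => spin (σ x) * spin (σ y), fun x y => by ring⟩

def ham {V : Type*} [Fintype V] [DecidableEq V] (G : SimpleGraph V) [DecidableRel G.Adj]
    (J : Sym2 V → ℝ) (h : V → ℝ) (σ : V → Bool) : ℝ :=
  - ∑ e ∈ G.edgeFinset, J e * pairProd σ e - ∑ x, h x * spin (σ x)

/-- The set of vertices where the spins of `σ` and `τ` disagree. -/
def Dset {V : Type*} [Fintype V] [DecidableEq V] (σ τ : V → Bool) : Finset V :=
  univ.filter fun x => σ x ≠ τ x

def edgeXor {V : Type*} (σ : V → Bool) : Sym2 V → Bool :=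
  Sym2.lift ⟨fun x y => xor (σ x) (σ y), fun x y => Bool.xor_comm _ _⟩

/-- The set of edges where the link overlaps of `σ` and `τ` disagree. -/
def Wset {V : Type*} [Fintype V] [DecidableEq V] (G : SimpleGraph V) [DecidableRel G.Adj]
    (σ τ : V → Bool) : Finset (Sym2 V) :=
  G.edgeFinset.filter fun e => edgeXor σ e ≠ edgeXor τ e

set_option linter.unusedSectionVars false

namespace OP
variable {V : Type*} [Fintype V] [DecidableEq V]

lemma abs_spin (b : Bool) : |spin b| = 1 := by cases b <;> simp [spin]

def chi (S : Finset V) (σ : V → Bool) : ℝ := ∏ x ∈ S, spin (σ x)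

lemma chi_eq (S : Finset V) (σ : V → Bool) :
    chi S σ = ∏ x, (if x ∈ S then spin (σ x) else 1) := by
  rw [chi, ← Finset.prod_filter]
  congr 1
  ext x; simp

lemma sum_chi_mul (S T : Finset V) :
    ∑ σ : V → Bool, chi S σ * chi T σ =
      if S = T then (2 : ℝ) ^ Fintype.card V else 0 := by
  have key : ∀ σ : V → Bool, chi S σ * chi T σ =
      ∏ x, ((if x ∈ S then spin (σ x) else 1) * (if x ∈ T then spin (σ x) else 1)) := by
    intro σ; rw [chi_eq, chi_eq, ← Finset.prod_mul_distrib]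
  simp_rw [key]
  rw [← Fintype.prod_sum (fun (x : V) (b : Bool) => (if x ∈ S then spin b else 1) * (if x ∈ T then spin b else 1))]
  have factor : ∀ x : V, (∑ b : Bool, (if x ∈ S then spin b else 1) * (if x ∈ T then spin b else 1))
      = if (x ∈ S ↔ x ∈ T) then 2 else 0 := by
    intro x
    by_cases hS : x ∈ S <;> by_cases hT : x ∈ T <;>
      simp [hS, hT, spin, Fintype.sum_bool] <;> norm_num
  simp_rw [factor]
  by_cases hST : S = T
  · subst hST
    simp
  · rw [if_neg hST]
    obtain ⟨x, hx⟩ : ∃ x, ¬ (x ∈ S ↔ x ∈ T) := by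
      by_contra hc
      push_neg at hc
      exact hST (Finset.ext hc)
    apply Finset.prod_eq_zero (Finset.mem_univ x)
    rw [if_neg hx]

end OP

namespace OP
variable {V : Type*} [Fintype V] [DecidableEq V]

lemma sum_chi (S : Finset V) (hS : S.Nonempty) : ∑ σ : V → Bool, chi S σ = 0 := by
  have h := sum_chi_mul S (∅ : Finset V)
  rw [if_neg (by simpa using hS.ne_empty)] at h
  have h0 : ∀ σ : V → Bool, chi S σ * chi (∅ : Finset V) σ = chi S σ := by
    intro σ; simp [chi]
  simp_rw [h0] at h
  exact h

lemma sum_lin {ι : Type*} (T : Finset ι) (c : ι → ℝ) (s : ι → Finset V)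
    (hne : ∀ i ∈ T, (s i).Nonempty) :
    ∑ σ : V → Bool, (∑ i ∈ T, c i * chi (s i) σ) = 0 := by
  rw [Finset.sum_comm]
  apply Finset.sum_eq_zero
  intro i hi
  rw [← Finset.mul_sum, sum_chi _ (hne i hi), mul_zero]

lemma sum_sq {ι : Type*} (T : Finset ι) (c : ι → ℝ) (s : ι → Finset V)
    (hinj : Set.InjOn s T) :
    ∑ σ : V → Bool, (∑ i ∈ T, c i * chi (s i) σ) ^ 2 =
      2 ^ Fintype.card V * ∑ i ∈ T, c i ^ 2 := by
  simp_rw [sq, Finset.sum_mul_sum]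
  rw [Finset.sum_comm]
  have : ∀ i ∈ T, ∑ σ : V → Bool, ∑ j ∈ T, (c i * chi (s i) σ) * (c j * chi (s j) σ)
      = 2 ^ Fintype.card V * (c i * c i) := by
    intro i hi
    rw [Finset.sum_comm]
    have inner : ∀ j ∈ T, ∑ σ : V → Bool, (c i * chi (s i) σ) * (c j * chi (s j) σ)
        = c i * c j * (if s i = s j then (2:ℝ) ^ Fintype.card V else 0) := by
      intro j hj
      rw [← sum_chi_mul, Finset.mul_sum]
      congr 1; ext σ; ring
    rw [Finset.sum_congr rfl inner,
      Finset.sum_eq_single_of_mem i hi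
        (fun j hj hne => by rw [if_neg (fun hs => hne (hinj hj hi hs.symm)), mul_zero]),
      if_pos rfl]
    ring
  rw [Finset.sum_congr rfl this, ← Finset.mul_sum]

def eSet : Sym2 V → Finset V := Sym2.lift ⟨fun x y => {x, y}, fun x y => by
  simp [Finset.pair_comm]⟩

lemma pairProd_eq_chi (e : Sym2 V) (he : ¬ e.IsDiag) (σ : V → Bool) :
    pairProd σ e = chi (eSet e) σ := by
  induction e with
  | _ x y =>
    rw [Sym2.mk_isDiag_iff] at he
    simp only [pairProd, eSet, Sym2.lift_mk, chi]
    rw [Finset.prod_pair he]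

lemma eSet_card (e : Sym2 V) (he : ¬ e.IsDiag) : (eSet e).card = 2 := by
  induction e with
  | _ x y =>
    rw [Sym2.mk_isDiag_iff] at he
    simp [eSet, Finset.card_pair he]

lemma eSet_inj (e f : Sym2 V) (he : ¬ e.IsDiag) (hf : ¬ f.IsDiag)
    (hef : eSet e = eSet f) : e = f := by
  induction e with
  | _ x y =>
    induction f with
    | _ u v =>
      rw [Sym2.mk_isDiag_iff] at he hf
      simp only [eSet, Sym2.lift_mk] at hef
      have hx : x = u ∨ x = v := by
        have : x ∈ ({u, v} : Finset V) := hef ▸ (by simp)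
        simpa using this
      have hy : y = u ∨ y = v := by
        have : y ∈ ({u, v} : Finset V) := hef ▸ (by simp)
        simpa using this
      rcases hx with rfl | rfl <;> rcases hy with rfl | rfl
      · exact absurd rfl he
      · rfl
      · exact Sym2.eq_swap
      · exact absurd rfl he

end OP

namespace OP
variable {V : Type*} [Fintype V] [DecidableEq V]

lemma ham_diff_le (G : SimpleGraph V) [DecidableRel G.Adj] (J J' : Sym2 V → ℝ)
    (h h' : V → ℝ) (δ : ℝ)
    (hJ : ∀ e ∈ G.edgeFinset, |J e - J' e| ≤ δ) (hh : ∀ x, |h x - h' x| ≤ δ)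
    (σ : V → Bool) :
    |ham G J h σ - ham G J' h' σ| ≤ δ * (G.edgeFinset.card + Fintype.card V) := by
  have habs : ∀ e : Sym2 V, |pairProd σ e| = 1 := by
    intro e; induction e with
    | _ x y => simp [pairProd, abs_mul, abs_spin]
  set A : ℝ := ∑ e ∈ G.edgeFinset, (J e - J' e) * pairProd σ e with hA
  set B : ℝ := ∑ x, (h x - h' x) * spin (σ x) with hB
  have hexp : ham G J h σ - ham G J' h' σ = -A - B := by
    simp only [ham, hA, hB, sub_mul, Finset.sum_sub_distrib]
    ring
  have hA' : |A| ≤ (G.edgeFinset.card : ℝ) * δ := by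
    calc |A| ≤ ∑ e ∈ G.edgeFinset, |(J e - J' e) * pairProd σ e| :=
          Finset.abs_sum_le_sum_abs _ _
      _ ≤ ∑ _e ∈ G.edgeFinset, δ := Finset.sum_le_sum (fun e he => by
          rw [abs_mul, habs e, mul_one]; exact hJ e he)
      _ = (G.edgeFinset.card : ℝ) * δ := by rw [Finset.sum_const, nsmul_eq_mul]
  have hB' : |B| ≤ (Fintype.card V : ℝ) * δ := by
    calc |B| ≤ ∑ x, |(h x - h' x) * spin (σ x)| := Finset.abs_sum_le_sum_abs _ _
      _ ≤ ∑ _x : V, δ := Finset.sum_le_sum (fun x _ => by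
          rw [abs_mul, abs_spin, mul_one]; exact hh x)
      _ = (Fintype.card V : ℝ) * δ := by
          rw [Finset.sum_const, nsmul_eq_mul, Finset.card_univ]
  have habsAB : |(-A) - B| ≤ |A| + |B| := by
    rw [show -A - B = -(A + B) by ring, abs_neg]
    exact abs_add_le _ _
  rw [hexp]
  calc |(-A) - B| ≤ |A| + |B| := habsAB
    _ ≤ (G.edgeFinset.card : ℝ) * δ + (Fintype.card V : ℝ) * δ := add_le_add hA' hB'
    _ = δ * (G.edgeFinset.card + Fintype.card V) := by ring

lemma exists_pair (G : SimpleGraph V) [DecidableRel G.Adj] (J : Sym2 V → ℝ) (h : V → ℝ) :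
    ∃ σ₀ σ₁ : V → Bool,
      Real.sqrt (∑ e ∈ G.edgeFinset, (J e) ^ 2 + ∑ x, (h x) ^ 2) ≤
        |ham G J h σ₀ - ham G J h σ₁| := by
  classical
  set T : Finset (Sym2 V ⊕ V) := G.edgeFinset.disjSum univ with hT
  set c : Sym2 V ⊕ V → ℝ := Sum.elim J h with hc
  set s : Sym2 V ⊕ V → Finset V := Sum.elim eSet (fun x => {x}) with hs
  set X : (V → Bool) → ℝ := fun σ => ∑ i ∈ T, c i * chi (s i) σ with hXdef
  have hnd : ∀ e ∈ G.edgeFinset, ¬ e.IsDiag := fun e he =>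
    G.not_isDiag_of_mem_edgeSet (SimpleGraph.mem_edgeFinset.mp he)
  have hne : ∀ i ∈ T, (s i).Nonempty := by
    rintro (e | x) hi
    · have he : e ∈ G.edgeFinset := by simpa [hT] using hi
      have hcard := eSet_card e (hnd e he)
      exact Finset.card_pos.mp (by rw [show s (Sum.inl e) = eSet e from rfl, hcard]; norm_num)
    · exact ⟨x, by simp [hs]⟩
  have hinj : Set.InjOn s ↑T := by
    rintro (e | x) hi (f | y) hj hij
    · have he : e ∈ G.edgeFinset := by simpa [hT] using hi
      have hf : f ∈ G.edgeFinset := by simpa [hT] using hj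
      exact congrArg Sum.inl (eSet_inj e f (hnd e he) (hnd f hf) hij)
    · have he : e ∈ G.edgeFinset := by simpa [hT] using hi
      have := congrArg Finset.card hij
      rw [show s (Sum.inl e) = eSet e from rfl, eSet_card e (hnd e he),
        show s (Sum.inr y) = {y} from rfl, Finset.card_singleton] at this
      omega
    · have hf : f ∈ G.edgeFinset := by simpa [hT] using hj
      have := congrArg Finset.card hij
      rw [show s (Sum.inl f) = eSet f from rfl, eSet_card f (hnd f hf),
        show s (Sum.inr x) = {x} from rfl, Finset.card_singleton] at this
      omega
    · exact congrArg Sum.inr (Finset.singleton_injective hij)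
  have hX : ∀ σ, ham G J h σ = - X σ := by
    intro σ
    have h1 : ∑ e ∈ G.edgeFinset, J e * pairProd σ e
        = ∑ e ∈ G.edgeFinset, J e * chi (eSet e) σ :=
      Finset.sum_congr rfl fun e he => by rw [pairProd_eq_chi e (hnd e he)]
    have h2 : ∀ x : V, chi ({x} : Finset V) σ = spin (σ x) := fun x => by simp [chi]
    simp only [ham, hXdef, hT, hc, hs, Finset.sum_disjSum, Sum.elim_inl, Sum.elim_inr, h1, h2]
    ring
  set v : ℝ := ∑ e ∈ G.edgeFinset, (J e) ^ 2 + ∑ x, (h x) ^ 2 with hv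
  have hvX : ∑ σ : V → Bool, X σ ^ 2 = 2 ^ Fintype.card V * v := by
    rw [hXdef]
    rw [sum_sq T c s hinj]
    congr 1
    rw [hT, Finset.sum_disjSum]
    simp [hc, hv]
  have hlin : ∑ σ : V → Bool, X σ = 0 := sum_lin T c s hne
  obtain ⟨σ0, hσ0⟩ : ∃ σ0 : V → Bool, v ≤ X σ0 ^ 2 := by
    by_contra hcon
    push_neg at hcon
    have hlt : ∑ σ : V → Bool, X σ ^ 2 < ∑ _σ : V → Bool, v :=
      Finset.sum_lt_sum_of_nonempty Finset.univ_nonempty (fun σ _ => hcon σ)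
    rw [hvX, Finset.sum_const, Finset.card_univ, Fintype.card_fun, Fintype.card_bool,
      nsmul_eq_mul] at hlt
    push_cast at hlt
    linarith
  obtain ⟨σm, hσm⟩ : ∃ σm : V → Bool, X σm ≤ 0 := by
    by_contra hcon
    push_neg at hcon
    have hpos : (0:ℝ) < ∑ σ : V → Bool, X σ :=
      Finset.sum_pos (fun σ _ => hcon σ) Finset.univ_nonempty
    rw [hlin] at hpos; exact lt_irrefl 0 hpos
  obtain ⟨σp, hσp⟩ : ∃ σp : V → Bool, 0 ≤ X σp := by
    by_contra hcon
    push_neg at hcon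
    have hpos : (0:ℝ) < ∑ σ : V → Bool, -X σ :=
      Finset.sum_pos (fun σ _ => neg_pos.mpr (hcon σ)) Finset.univ_nonempty
    rw [Finset.sum_neg_distrib, hlin, neg_zero] at hpos
    exact lt_irrefl 0 hpos
  have hsq : Real.sqrt v ≤ |X σ0| := by
    rw [← Real.sqrt_sq_eq_abs]
    exact Real.sqrt_le_sqrt hσ0
  rcases le_or_gt 0 (X σ0) with hpos | hneg
  · refine ⟨σ0, σm, ?_⟩
    rw [hX, hX]
    calc Real.sqrt v ≤ |X σ0| := hsq
      _ = X σ0 := abs_of_nonneg hpos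
      _ ≤ X σ0 - X σm := by linarith
      _ ≤ |(-X σ0) - (-X σm)| := by
          rw [show (-X σ0) - (-X σm) = -(X σ0 - X σm) by ring, abs_neg]
          exact le_abs_self _
  · refine ⟨σp, σ0, ?_⟩
    rw [hX, hX]
    calc Real.sqrt v ≤ |X σ0| := hsq
      _ = -(X σ0) := abs_of_neg hneg
      _ ≤ X σp - X σ0 := by linarith
      _ ≤ |(-X σp) - (-X σ0)| := by
          rw [show (-X σp) - (-X σ0) = -(X σp - X σ0) by ring, abs_neg]
          exact le_abs_self _

end OP

/-- Order preservation: if `2δ(|E|+|V|) ≤ ε √v_H`, then ordering under the perturbed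
Hamiltonian is preserved by the original one up to error `ε R_H`. -/
theorem order_preservation {V : Type*} [Fintype V] [DecidableEq V]
    (G : SimpleGraph V) [DecidableRel G.Adj] (J J' : Sym2 V → ℝ) (h h' : V → ℝ) (δ ε : ℝ)
    (hε : 0 < ε)
    (hJ : ∀ e ∈ G.edgeFinset, |J e - J' e| ≤ δ) (hh : ∀ x, |h x - h' x| ≤ δ)
    (hcond : 2 * δ * (G.edgeFinset.card + Fintype.card V) ≤
      ε * Real.sqrt (∑ e ∈ G.edgeFinset, (J e) ^ 2 + ∑ x, (h x) ^ 2))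
    (R : ℝ)
    (hR : IsGreatest (Set.range fun p : (V → Bool) × (V → Bool) =>
      |ham G J h p.1 - ham G J h p.2|) R)
    (σ τ : V → Bool) (hord : ham G J' h' τ ≤ ham G J' h' σ) :
    ham G J h τ - ε * R ≤ ham G J h σ := by
  classical
  have hδτ := OP.ham_diff_le G J J' h h' δ hJ hh τ
  have hδσ := OP.ham_diff_le G J J' h h' δ hJ hh σ
  obtain ⟨σ0, σ1, hkey⟩ := OP.exists_pair G J h
  have hRge : Real.sqrt (∑ e ∈ G.edgeFinset, (J e) ^ 2 + ∑ x, (h x) ^ 2) ≤ R :=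
    hkey.trans (hR.2 ⟨(σ0, σ1), rfl⟩)
  have h1 := abs_le.mp hδτ
  have h2 := abs_le.mp hδσ
  have hεR : ε * Real.sqrt (∑ e ∈ G.edgeFinset, (J e) ^ 2 + ∑ x, (h x) ^ 2) ≤ ε * R :=
    mul_le_mul_of_nonneg_left hRge hε.le
  linarith [h1.1, h1.2, h2.1, h2.2]
end
end

section
/- Let G be the one-dimensional discrete torus on N vertices (cycle graph Z/NZ) with Hamiltonian H(σ) = -∑_{x=1}^{N} J_{x,x+1} σ_x σ_{x+1} (indices mod N). Then the total margin satisfies 2∑_{x=1}^N |J_{x,x+1}| - 4 min_x |J_{x,x+1}| ≤ R_H ≤ 2∑_{x=1}^N |J_{x,x+1}|, where R_H = max_σ H(σ) - min_σ H(σ). -/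
open Finset

noncomputable section

/-- Ising Hamiltonian on the one-dimensional discrete torus `ℤ/Nℤ`, where `J x` is the
coupling on the edge `{x, x+1}` and there are no external fields. -/
def cycleHam (N : ℕ) [NeZero N] (J : ZMod N → ℝ) (σ : ZMod N → Bool) : ℝ :=
  - ∑ x : ZMod N, J x * spin (σ x) * spin (σ (x + 1))

lemma abs_spin (b : Bool) : |spin b| = 1 := by cases b <;> simp [spin]

lemma spin_mul_spin_xor (c d : Bool) :
    spin c * spin (xor c d) = if d then -1 else 1 := by
  cases c <;> cases d <;> norm_num [spin]

/-- partial spin assignments along the cycle starting at `y`. -/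
def chain (N : ℕ) [NeZero N] (J : ZMod N → ℝ) (y : ZMod N) : ℕ → Bool
  | 0 => true
  | k + 1 => xor (chain N J y k) (decide (J (y + (k : ZMod N)) < 0))

lemma exists_good (N : ℕ) [NeZero N] (hN : 3 ≤ N) (J : ZMod N → ℝ) (x0 : ZMod N) :
    ∃ σ : ZMod N → Bool, ∀ x, x ≠ x0 →
      J x * spin (σ x) * spin (σ (x + 1)) = |J x| := by
  set y := x0 + 1 with hy
  refine ⟨fun x => chain N J y ((x - y).val), fun x hx => ?_⟩
  set k := (x - y).val with hk
  have hcast : ((k : ℕ) : ZMod N) = x - y := by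
    simp [hk, ZMod.natCast_val, ZMod.cast_id]
  have hkN : k < N - 1 := by
    have h1 : k < N := ZMod.val_lt _
    rcases lt_or_eq_of_le (Nat.le_sub_one_of_lt h1) with h | h
    · exact h
    · exfalso
      apply hx
      have : x - y = ((N - 1 : ℕ) : ZMod N) := by rw [← hcast, h]
      have hN1 : ((N - 1 : ℕ) : ZMod N) = -1 := by
        have : ((N : ℕ) : ZMod N) = 0 := ZMod.natCast_self N
        have hN' : 1 ≤ N := by omega
        push_cast [Nat.cast_sub hN']
        simp
      have hxy : x = y - 1 := by
        have := this.trans hN1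
        linear_combination (norm := ring_nf) this
      rw [hxy, hy]; ring
  have hval1 : (1 : ZMod N).val = 1 := ZMod.val_one'' (by omega)
  have hsucc : (x + 1 - y).val = k + 1 := by
    have : x + 1 - y = (x - y) + 1 := by ring
    rw [this, ZMod.val_add, hval1, hk]
    exact Nat.mod_eq_of_lt (by omega)
  have hyx : y + (k : ZMod N) = x := by rw [hcast]; ring
  have hchain : chain N J y ((x + 1 - y).val) =
      xor (chain N J y k) (decide (J x < 0)) := by
    rw [hsucc]
    simp [chain, hyx]
  simp only [hchain, ← hk, mul_assoc, spin_mul_spin_xor]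
  by_cases h : J x < 0
  · simp [h, abs_of_neg h]
  · simp [h, abs_of_nonneg (not_lt.mp h)]

lemma abs_ham_le (N : ℕ) [NeZero N] (J : ZMod N → ℝ) (σ : ZMod N → Bool) :
    |cycleHam N J σ| ≤ ∑ x : ZMod N, |J x| := by
  rw [cycleHam, abs_neg]
  refine le_trans (Finset.abs_sum_le_sum_abs _ _) (Finset.sum_le_sum fun x _ => ?_)
  rw [abs_mul, abs_mul, abs_spin, abs_spin, mul_one, mul_one]

lemma ham_le (N : ℕ) [NeZero N] (hN : 3 ≤ N) (J : ZMod N → ℝ) (x0 : ZMod N) :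
    ∃ σ : ZMod N → Bool,
      cycleHam N J σ ≤ -(∑ x : ZMod N, |J x|) + 2 * |J x0| := by
  obtain ⟨σ, hσ⟩ := exists_good N hN J x0
  refine ⟨σ, ?_⟩
  have hsplit : ∀ f : ZMod N → ℝ,
      ∑ x : ZMod N, f x = f x0 + ∑ x ∈ univ.erase x0, f x := by
    intro f
    rw [Finset.add_sum_erase _ _ (mem_univ x0)]
  have h1 : ∑ x ∈ univ.erase x0, (J x * spin (σ x) * spin (σ (x+1))) =
      ∑ x ∈ univ.erase x0, |J x| := by
    refine Finset.sum_congr rfl fun x hx => hσ x (Finset.ne_of_mem_erase hx)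
  have h2 : -|J x0| ≤ J x0 * spin (σ x0) * spin (σ (x0+1)) := by
    have : |J x0 * spin (σ x0) * spin (σ (x0+1))| = |J x0| := by
      rw [abs_mul, abs_mul, abs_spin, abs_spin, mul_one, mul_one]
    linarith [neg_abs_le (J x0 * spin (σ x0) * spin (σ (x0+1))), this]
  have h3 : ∑ x : ZMod N, |J x| = |J x0| + ∑ x ∈ univ.erase x0, |J x| :=
    hsplit _
  rw [cycleHam, hsplit (fun x => J x * spin (σ x) * spin (σ (x+1))), h1]
  linarith

lemma ham_neg (N : ℕ) [NeZero N] (J : ZMod N → ℝ) (σ : ZMod N → Bool) :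
    cycleHam N (fun x => -J x) σ = - cycleHam N J σ := by
  simp [cycleHam, Finset.sum_neg_distrib, neg_mul]

/-- Total margin bounds for the one-dimensional torus:
`2∑|J_x| - 4 min|J_x| ≤ R_H ≤ 2∑|J_x|`. -/
theorem cycle_total_margin (N : ℕ) [NeZero N] (hN : 3 ≤ N) (J : ZMod N → ℝ) (R : ℝ)
    (hR : IsGreatest (Set.range fun p : (ZMod N → Bool) × (ZMod N → Bool) =>
      |cycleHam N J p.1 - cycleHam N J p.2|) R) :
    2 * ∑ x : ZMod N, |J x| - 4 * univ.inf' univ_nonempty (fun x : ZMod N => |J x|) ≤ R ∧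
    R ≤ 2 * ∑ x : ZMod N, |J x| := by
  obtain ⟨hmem, hub⟩ := hR
  constructor
  · obtain ⟨x0, -, hx0⟩ := Finset.exists_mem_eq_inf' (univ_nonempty)
      (fun x : ZMod N => |J x|)
    rw [hx0]
    obtain ⟨τ, hτ⟩ := ham_le N hN J x0
    obtain ⟨σ, hσ'⟩ := ham_le N hN (fun x => -J x) x0
    rw [ham_neg] at hσ'
    simp only [abs_neg] at hσ'
    have hσ : ∑ x : ZMod N, |J x| - 2 * |J x0| ≤ cycleHam N J σ := by linarith
    have hRge : |cycleHam N J σ - cycleHam N J τ| ≤ R := hub ⟨(σ, τ), rfl⟩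
    have := le_abs_self (cycleHam N J σ - cycleHam N J τ)
    linarith
  · obtain ⟨p, hp⟩ := hmem
    have h1 := abs_ham_le N J p.1
    have h2 := abs_ham_le N J p.2
    rw [← hp]
    calc |cycleHam N J p.1 - cycleHam N J p.2|
        ≤ |cycleHam N J p.1| + |cycleHam N J p.2| := abs_sub _ _
      _ ≤ 2 * ∑ x : ZMod N, |J x| := by linarith
end
end
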